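/- Let A be a linear order with a left endpoint and with cofinality ω, witnessed by an increasing cofinal sequence ⟨aₙ : n < ω⟩ starting at the minimum a₀. Then there is a monotone surjection from the ℤ-indexed sum ⋯ + 1 + A + 1 + A + 1 + ⋯ onto A. -/

import Mathlib

/-- If `A` has a left endpoint `a 0` and an increasing cofinal sequence `⟨a n : n < ω⟩`,
then the `ℤ`-indexed sum `⋯ + 1 + A + 1 + A + 1 + ⋯` (formalized as the lexicographic
product `ℤ ×ₗ (WithBot A)`, i.e. `ℤ` copies of `1 + A`) surjects monotonically onto `A`. -/
theorem zsum_epi_onto {A : Type*} [LinearOrder A] (a : ℕ → A)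
    (hmin : ∀ x, a 0 ≤ x) (hmono : StrictMono a) (hcof : ∀ x, ∃ n, x ≤ a n) :
    ∃ f : ℤ ×ₗ (WithBot A) → A, Monotone f ∧ Function.Surjective f := by
  classical
  set g : ℤ → WithBot A → A := fun k x =>
    if k < 0 then a 0 else
      x.recBotCoe (a k.toNat) (fun y => min (max (a k.toNat) y) (a (k.toNat + 1))) with hg
  have hlow : ∀ k x, a k.toNat ≤ g k x := by
    intro k x
    by_cases hk : k < 0
    · simp [hg, hk]
      have : k.toNat = 0 := Int.toNat_of_nonpos hk.le
      simp [this]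
    · cases x with
      | bot => simp [hg, hk]
      | coe y =>
        simp only [hg, hk, if_false, WithBot.recBotCoe_coe]
        exact le_min (le_max_left _ _) (hmono.monotone (Nat.le_succ _))
  have hhigh : ∀ k x, g k x ≤ a (k.toNat + 1) := by
    intro k x
    by_cases hk : k < 0
    · simp [hg, hk]; exact hmin _
    · cases x with
      | bot => simp [hg, hk]; exact (hmono.monotone (Nat.le_succ _))
      | coe y => simp [hg, hk]
  refine ⟨fun p => g (ofLex p).1 (ofLex p).2, ?_, ?_⟩
  · intro p q hpq
    obtain ⟨k1, x1⟩ := p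
    obtain ⟨k2, x2⟩ := q
    show g k1 x1 ≤ g k2 x2
    rcases Prod.Lex.le_iff.mp hpq with h | ⟨h1, h2⟩
    · replace h : k1 < k2 := h
      by_cases hk2 : k2 < 0
      · have hk1 : k1 < 0 := h.trans hk2
        simp [hg, hk1, hk2]
      · by_cases hk1 : k1 < 0
        · calc g k1 x1 = a 0 := by simp [hg, hk1]
            _ ≤ a k2.toNat := hmono.monotone (Nat.zero_le _)
            _ ≤ g k2 x2 := hlow _ _
        · have : k1.toNat + 1 ≤ k2.toNat := by omega
          calc g k1 x1 ≤ a (k1.toNat + 1) := hhigh _ _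
            _ ≤ a k2.toNat := hmono.monotone this
            _ ≤ g k2 x2 := hlow _ _
    · replace h1 : k1 = k2 := h1
      replace h2 : x1 ≤ x2 := h2
      subst h1
      by_cases hk : k1 < 0
      · simp [hg, hk]
      · cases x1 with
        | bot =>
          have hb : g k1 ⊥ = a k1.toNat := by simp [hg, hk]
          rw [hb]; exact hlow _ _
        | coe y1 =>
          cases x2 with
          | bot => exact absurd h2 (by simp)
          | coe y2 =>
            have hy : y1 ≤ y2 := by exact_mod_cast h2
            show (if k1 < 0 then a 0 else _) ≤ (if k1 < 0 then a 0 else _)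
            simp only [hk, if_false, WithBot.recBotCoe_coe]
            exact min_le_min (max_le_max le_rfl hy) le_rfl
  · intro y
    have hex : ∃ n, y ≤ a n := hcof y
    have hyn : y ≤ a (Nat.find hex) := Nat.find_spec hex
    cases hn : Nat.find hex with
    | zero =>
      rw [hn] at hyn
      refine ⟨toLex (-1, ⊥), ?_⟩
      have : y = a 0 := le_antisymm hyn (hmin y)
      simp [hg, this]
    | succ m =>
      rw [hn] at hyn
      have hm : ¬ y ≤ a m := Nat.find_min hex (by omega)
      refine ⟨toLex ((m : ℤ), (y : WithBot A)), ?_⟩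
      have hk : ¬ ((m : ℤ) < 0) := by simp
      simp only [ofLex_toLex, hg, hk, if_false, WithBot.recBotCoe_coe, Int.toNat_natCast]
      rw [max_eq_right (le_of_lt (lt_of_not_ge hm)), min_eq_left hyn]
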